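/- Let X be a topological vector space over ℝ. If A, B ⊆ X are non-meager Baire sets, then both A + B = {a + b : a ∈ A, b ∈ B} and A − B = {a − b : a ∈ A, b ∈ B} contain nonempty open subsets of X. -/

import Mathlib

open Set Pointwise Filter

section Aux

variable {X : Type*} [TopologicalSpace X]

lemma IsMeagre.union' {s t : Set X} (hs : IsMeagre s) (ht : IsMeagre t) :
    IsMeagre (s ∪ t) := by
  rw [IsMeagre, compl_union]
  exact Filter.inter_mem hs ht

lemma IsMeagre.preimage_homeo {Y : Type*} [TopologicalSpace Y] (f : X ≃ₜ Y)
    {s : Set Y} (h : IsMeagre s) : IsMeagre (f ⁻¹' s) :=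
  h.preimage_of_isOpenMap f.continuous f.isOpenMap

lemma IsMeagre.image_homeo {Y : Type*} [TopologicalSpace Y] (f : X ≃ₜ Y)
    {s : Set X} (h : IsMeagre s) : IsMeagre (f '' s) := by
  have : f '' s = f.symm ⁻¹' s := (f.toEquiv.image_eq_preimage_symm s)
  rw [this]
  exact h.preimage_homeo f.symm

end Aux

section TVS

variable {X : Type*} [AddCommGroup X] [Module ℝ X] [TopologicalSpace X]
  [IsTopologicalAddGroup X] [ContinuousSMul ℝ X]

/-- In a topological vector space over ℝ containing a nonmeager set, every nonempty open
set is nonmeager. -/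
lemma open_nonmeagre {C : Set X} (hC : ¬ IsMeagre C) {U : Set X} (hUo : IsOpen U)
    (hne : U.Nonempty) : ¬ IsMeagre U := by
  intro hmU
  apply hC
  obtain ⟨x₀, hx₀⟩ := hne
  set W : Set X := (Homeomorph.addLeft x₀) ⁻¹' U with hWdef
  have hWm : IsMeagre W := hmU.preimage_homeo _
  have hWo : IsOpen W := hUo.preimage (Homeomorph.addLeft x₀).continuous
  have hW0 : (0 : X) ∈ W := by
    simp only [hWdef, mem_preimage, Homeomorph.coe_addLeft, add_zero]
    exact hx₀
  have cover : (univ : Set X) ⊆ ⋃ n : ℕ, ((n : ℝ) + 1) • W := by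
    intro x _
    have h1 : Tendsto (fun n : ℕ => ((n : ℝ) + 1)⁻¹) atTop (nhds 0) := by
      have := tendsto_one_div_add_atTop_nhds_zero_nat (𝕜 := ℝ)
      simpa [one_div] using this
    have h2 : Tendsto (fun n : ℕ => ((n : ℝ) + 1)⁻¹ • x) atTop (nhds (0 : X)) := by
      simpa using h1.smul_const x
    have := (h2.eventually (hWo.mem_nhds hW0)).exists
    obtain ⟨n, hn⟩ := this
    refine mem_iUnion.2 ⟨n, ?_⟩
    have hne0 : ((n : ℝ) + 1) ≠ 0 := by positivity
    refine ⟨((n : ℝ) + 1)⁻¹ • x, hn, ?_⟩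
    show ((n : ℝ) + 1) • (((n : ℝ) + 1)⁻¹ • x) = x
    rw [smul_smul, mul_inv_cancel₀ hne0, one_smul]
  have hmeach : ∀ n : ℕ, IsMeagre (((n : ℝ) + 1) • W) := by
    intro n
    have hne0 : ((n : ℝ) + 1) ≠ 0 := by positivity
    have : ((n : ℝ) + 1) • W = (Homeomorph.smulOfNeZero ((n : ℝ) + 1) hne0) '' W := rfl
    rw [this]
    exact hWm.image_homeo _
  exact ((isMeagre_iUnion hmeach).mono cover).mono (subset_univ C)

/-- Key step: given a nonmeager set `C`, open sets `U`, `V`, meager sets `P`, `Q`,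
a homeomorphism `f`, if `U ∩ f '' V` is nonempty then there is `v ∈ V \ Q` with
`f v ∈ U \ P`. -/
lemma exists_good_point {C : Set X} (hC : ¬ IsMeagre C) (f : X ≃ₜ X)
    {U V P Q : Set X} (hUo : IsOpen U) (hVo : IsOpen V)
    (hP : IsMeagre P) (hQ : IsMeagre Q) (hne : (U ∩ f '' V).Nonempty) :
    ∃ v ∈ V \ Q, f v ∈ U \ P := by
  set T : Set X := U ∩ f '' V with hT
  have hTo : IsOpen T := hUo.inter (f.isOpenMap V hVo)
  have hTnm : ¬ IsMeagre T := open_nonmeagre hC hTo hne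
  have hM : IsMeagre (P ∪ f '' Q) := hP.union' (hQ.image_homeo f)
  have hnonsub : ¬ T ⊆ P ∪ f '' Q := fun h => hTnm (hM.mono h)
  obtain ⟨t, htT, htM⟩ := not_subset.mp hnonsub
  obtain ⟨htU, v, hvV, hfv⟩ := htT
  refine ⟨v, ⟨hvV, ?_⟩, ?_⟩
  · intro hvQ
    exact htM (Or.inr ⟨v, hvQ, hfv⟩)
  · rw [hfv]
    exact ⟨htU, fun hP' => htM (Or.inl hP')⟩

end TVS

/-- Piccard's theorem in a topological vector space: if `A, B ⊆ X` are non-meager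
sets with the Baire property, then both `A + B` and `A - B` contain nonempty open sets. -/
theorem piccard_tvs
    (X : Type*) [AddCommGroup X] [Module ℝ X] [TopologicalSpace X]
    [IsTopologicalAddGroup X] [ContinuousSMul ℝ X]
    (A B : Set X)
    (hA_nonmeager : ¬ IsMeagre A)
    (hA_baire : ∃ U : Set X, IsOpen U ∧ IsMeagre (symmDiff A U))
    (hB_nonmeager : ¬ IsMeagre B)
    (hB_baire : ∃ U : Set X, IsOpen U ∧ IsMeagre (symmDiff B U)) :
    (∃ O : Set X, IsOpen O ∧ O.Nonempty ∧ O ⊆ A + B) ∧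
      (∃ O : Set X, IsOpen O ∧ O.Nonempty ∧ O ⊆ A - B) := by
  obtain ⟨U, hUo, hP⟩ := hA_baire
  obtain ⟨V, hVo, hQ⟩ := hB_baire
  -- A ⊇ U \ (A Δ U), B ⊇ V \ (B Δ V)
  have hUA : U \ symmDiff A U ⊆ A := by
    intro u ⟨huU, hu⟩
    by_contra huA
    exact hu (Or.inr ⟨huU, huA⟩)
  have hVB : V \ symmDiff B V ⊆ B := by
    intro v ⟨hvV, hv⟩
    by_contra hvB
    exact hv (Or.inr ⟨hvV, hvB⟩)
  -- U and V are nonempty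
  have hUne : U.Nonempty := by
    rcases eq_empty_or_nonempty U with h | h
    · exfalso
      apply hA_nonmeager
      apply hP.mono
      intro a ha
      exact Or.inl ⟨ha, by simp [h]⟩
    · exact h
  have hVne : V.Nonempty := by
    rcases eq_empty_or_nonempty V with h | h
    · exfalso
      apply hB_nonmeager
      apply hQ.mono
      intro b hb
      exact Or.inl ⟨hb, by simp [h]⟩
    · exact h
  constructor
  · -- A + B contains U + V
    refine ⟨U + V, hVo.add_left, hUne.add hVne, ?_⟩
    intro x hx
    obtain ⟨u, hu, v, hv, huv⟩ := mem_add.mp hx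
    have hne : (U ∩ (Homeomorph.subLeft x) '' V).Nonempty := by
      refine ⟨u, hu, v, hv, ?_⟩
      simp only [Homeomorph.subLeft_apply]
      rw [← huv]; abel
    obtain ⟨b, ⟨hbV, hbQ⟩, hfb⟩ :=
      exists_good_point hA_nonmeager (Homeomorph.subLeft x) hUo hVo hP hQ hne
    simp only [Homeomorph.subLeft_apply] at hfb
    have haA : x - b ∈ A := hUA hfb
    have hbB : b ∈ B := hVB ⟨hbV, hbQ⟩
    have : (x - b) + b = x := by abel
    rw [← this]
    exact add_mem_add haA hbB
  · -- A - B contains U - V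
    refine ⟨U - V, hVo.sub_left, hUne.sub hVne, ?_⟩
    intro x hx
    obtain ⟨u, hu, v, hv, huv⟩ := mem_sub.mp hx
    have hne : (U ∩ (Homeomorph.addLeft x) '' V).Nonempty := by
      refine ⟨u, hu, v, hv, ?_⟩
      simp only [Homeomorph.coe_addLeft]
      rw [← huv]; abel
    obtain ⟨b, ⟨hbV, hbQ⟩, hfb⟩ :=
      exists_good_point hA_nonmeager (Homeomorph.addLeft x) hUo hVo hP hQ hne
    simp only [Homeomorph.coe_addLeft] at hfb
    have haA : x + b ∈ A := hUA hfb
    have hbB : b ∈ B := hVB ⟨hbV, hbQ⟩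
    have : (x + b) - b = x := by abel
    rw [← this]
    exact sub_mem_sub haA hbB
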